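/- Let 𝔧 be a strongly stable ideal in R, m a positive integer, and 𝔊 a [𝔧,m]-marked set. Then 𝔊 is a [𝔧,m]-marked basis if and only if 𝔊 admits a [𝔧,m]-completion and the [𝔧,m]-reduced forms modulo (𝔊) are unique. -/

import Mathlib

open MvPolynomial

namespace Paper

/-- Monomials (exponent vectors) in `N` variables. -/
abbrev Mon (N : ℕ) := Fin N →₀ ℕ

variable {N : ℕ}

/-- Total degree of a monomial. -/
def mdeg (u : Mon N) : ℕ := u.sum fun _ e => e

/-- `BorelStep a b` : `b` is obtained from `a` by one increasing elementary move,
i.e. `x^a · x_j = x^b · x_i` with `i < j`. -/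
def BorelStep (a b : Mon N) : Prop :=
  ∃ i j : Fin N, i < j ∧ a + Finsupp.single j 1 = b + Finsupp.single i 1

/-- `BorelLt a b` : `a <_B b`, i.e. `b` is obtained from `a` by a nonempty
sequence of increasing elementary moves. -/
def BorelLt (a b : Mon N) : Prop := Relation.TransGen BorelStep a b

/-- A (combinatorially encoded) monomial ideal: a set of monomials closed
under multiplication by monomials. -/
def MonIdeal (J : Set (Mon N)) : Prop := ∀ u ∈ J, ∀ d : Mon N, u + d ∈ J

/-- A strongly stable monomial ideal. -/
def StronglyStable (J : Set (Mon N)) : Prop :=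
  MonIdeal J ∧ ∀ b ∈ J, ∀ a, BorelLt b a → a ∈ J

/-- The minimal monomial basis `B_J` of a monomial ideal. -/
def MinBasis (J : Set (Mon N)) : Set (Mon N) :=
  {u | u ∈ J ∧ ∀ v ∈ J, v ≤ u → v = u}

/-- `min(x^a) ≥ max(x^h)`. -/
def StarCond (a h : Mon N) : Prop :=
  ∀ i j : Fin N, a i ≠ 0 → h j ≠ 0 → j ≤ i


variable (K : Type) [Field K]

/-- The monomial `x^u` as a polynomial. -/
noncomputable def mono {N : ℕ} (u : Mon N) : MvPolynomial (Fin N) K :=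
  MvPolynomial.monomial u (1 : K)

/-- The (actual) monomial ideal of `S` spanned by a set of monomials. -/
noncomputable def idealOf {N : ℕ} (J : Set (Mon N)) : Ideal (MvPolynomial (Fin N) K) :=
  Ideal.span (mono K '' J)

/-- The irrelevant maximal ideal `(x_0, …, x_n)`. -/
noncomputable def irrel (N : ℕ) : Ideal (MvPolynomial (Fin N) K) :=
  Ideal.span (Set.range MvPolynomial.X)

/-- The saturation `I^sat = ⋃_j (I : (x_0,…,x_n)^j)`. -/
noncomputable def satIdeal {N : ℕ} (I : Ideal (MvPolynomial (Fin N) K)) :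
    Ideal (MvPolynomial (Fin N) K) :=
  ⨆ k : ℕ, Submodule.colon I ((irrel K N ^ k : Ideal (MvPolynomial (Fin N) K)) : Set (MvPolynomial (Fin N) K))

/-- The satiety of a homogeneous ideal: the smallest `m` such that
`I_t = (I^sat)_t` for all `t ≥ m`. -/
noncomputable def satiety {N : ℕ} (I : Ideal (MvPolynomial (Fin N) K)) : ℕ :=
  sInf {m | ∀ t, m ≤ t → ∀ p : MvPolynomial (Fin N) K,
    p.IsHomogeneous t → (p ∈ I ↔ p ∈ satIdeal K I)}

/-- The saturation of a combinatorial monomial ideal. -/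
def msat {N : ℕ} (J : Set (Mon N)) : Set (Mon N) :=
  {u | ∃ k : ℕ, ∀ d : Mon N, mdeg d = k → u + d ∈ J}

/-- The satiety of a combinatorial monomial ideal. -/
noncomputable def msatiety {N : ℕ} (J : Set (Mon N)) : ℕ :=
  sInf {m | ∀ u : Mon N, m ≤ mdeg u → (u ∈ J ↔ u ∈ msat J)}

/-- A non-homogeneous `𝔧`-marked set: marked polynomials `f_α` with pairwise
distinct head terms forming `B_𝔧` and tails supported outside `𝔧`. -/
def NHMarkedSet {N : ℕ} (𝔧 : Set (Mon N)) (f : Mon N → MvPolynomial (Fin N) K) : Prop :=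
  ∀ α ∈ MinBasis 𝔧,
    MvPolynomial.coeff α (f α) = 1 ∧
    ∀ u ∈ (f α).support, u ≠ α → u ∉ 𝔧

/-- One step of the `𝔊_∗`-reduction: the monomial `x^γ = x^α ∗_𝔧 x^η` of the
support of `g` is replaced by `x^η · T(f_α)`. -/
def RStep {N : ℕ} (𝔧 : Set (Mon N)) (f : Mon N → MvPolynomial (Fin N) K)
    (g g₁ : MvPolynomial (Fin N) K) : Prop :=
  ∃ γ α η : Mon N, γ ∈ g.support ∧ γ ∈ 𝔧 ∧ α ∈ MinBasis 𝔧 ∧ γ = α + η ∧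
    StarCond α η ∧
    g₁ = g - MvPolynomial.coeff γ g • (mono K η * f α)

/-- The `𝔊_∗`-reduction relation (reflexive-transitive closure of `RStep`). -/
def Reduces {N : ℕ} (𝔧 : Set (Mon N)) (f : Mon N → MvPolynomial (Fin N) K) :
    MvPolynomial (Fin N) K → MvPolynomial (Fin N) K → Prop :=
  Relation.ReflTransGen (RStep K 𝔧 f)

/-- `g` is reduced: `supp(g) ∩ 𝔧 = ∅`. -/
def IsReducedPoly {N : ℕ} (𝔧 : Set (Mon N)) (g : MvPolynomial (Fin N) K) : Prop :=
  ∀ u ∈ g.support, u ∉ 𝔧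

/-- A `[𝔧,m]`-marked set: a n.h. `𝔧`-marked set whose tails are supported in
`N(𝔧)_{≤ max{m,|α|}}`. -/
def JmMarkedSet {N : ℕ} (𝔧 : Set (Mon N)) (m : ℕ)
    (f : Mon N → MvPolynomial (Fin N) K) : Prop :=
  ∀ α ∈ MinBasis 𝔧,
    MvPolynomial.coeff α (f α) = 1 ∧
    ∀ u ∈ (f α).support, u ≠ α → (u ∉ 𝔧 ∧ mdeg u ≤ max m (mdeg α))

/-- The ideal `(𝔊)` generated by a marked set. -/
noncomputable def idealG {N : ℕ} (𝔧 : Set (Mon N))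
    (f : Mon N → MvPolynomial (Fin N) K) : Ideal (MvPolynomial (Fin N) K) :=
  Ideal.span (f '' MinBasis 𝔧)

/-- A `[𝔧,m]`-completion of `𝔊`: marked polynomials `f_β ∈ (𝔊)` with pairwise
distinct head terms the monomials of `𝔧_{≤m} \ B_𝔧` and tails in `N(𝔧)_{≤m}`. -/
def IsCompletion {N : ℕ} (𝔧 : Set (Mon N)) (m : ℕ)
    (f h : Mon N → MvPolynomial (Fin N) K) : Prop :=
  ∀ β : Mon N, β ∈ 𝔧 → mdeg β ≤ m → β ∉ MinBasis 𝔧 →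
    h β ∈ idealG K 𝔧 f ∧
    MvPolynomial.coeff β (h β) = 1 ∧
    ∀ u ∈ (h β).support, u ≠ β → (u ∉ 𝔧 ∧ mdeg u ≤ m)

/-- `g'` is a `[𝔧,m]`-reduced form of `g` modulo `(𝔊)`. -/
def IsReducedForm {N : ℕ} (𝔧 : Set (Mon N)) (m : ℕ)
    (f : Mon N → MvPolynomial (Fin N) K)
    (g g' : MvPolynomial (Fin N) K) : Prop :=
  (∀ u ∈ g'.support, u ∉ 𝔧 ∧ mdeg u ≤ max m g.totalDegree) ∧
  g - g' ∈ idealG K 𝔧 f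

/-- `R_{≤ t}`: the `K`-subspace of polynomials of degree at most `t`. -/
noncomputable def degLE (N : ℕ) (t : ℕ) : Submodule K (MvPolynomial (Fin N) K) where
  carrier := {g | ∀ u ∈ g.support, mdeg u ≤ t}
  zero_mem' := by simp
  add_mem' := by
    intro a b ha hb u hu
    rcases Finset.mem_union.mp (MvPolynomial.support_add hu) with h | h
    · exact ha u h
    · exact hb u h
  smul_mem' := by
    intro c a ha u hu
    exact ha u (MvPolynomial.support_smul hu)

/-- `⟨N(𝔧)_{≤t}⟩`: the `K`-span of the monomials outside `𝔧` of degree `≤ t`. -/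
noncomputable def spanNLE {N : ℕ} (𝔧 : Set (Mon N)) (t : ℕ) :
    Submodule K (MvPolynomial (Fin N) K) :=
  Submodule.span K (mono K '' {u : Mon N | u ∉ 𝔧 ∧ mdeg u ≤ t})

/-- `(𝔊)_{≤t}`: the `K`-subspace of elements of `(𝔊)` of degree `≤ t`. -/
noncomputable def GleSub {N : ℕ} (𝔧 : Set (Mon N))
    (f : Mon N → MvPolynomial (Fin N) K) (t : ℕ) :
    Submodule K (MvPolynomial (Fin N) K) :=
  (idealG K 𝔧 f).restrictScalars K ⊓ degLE K N t

/-- A `[𝔧,m]`-marked basis: a `[𝔧,m]`-marked set with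
`R_{≤t} = ⟨N(𝔧)_{≤t}⟩ ⊕ (𝔊)_{≤t}` for all `t ≥ m`. -/
def JmMarkedBasis {N : ℕ} (𝔧 : Set (Mon N)) (m : ℕ)
    (f : Mon N → MvPolynomial (Fin N) K) : Prop :=
  JmMarkedSet K 𝔧 m f ∧
  ∀ t, m ≤ t →
    Disjoint (spanNLE K 𝔧 t) (GleSub K 𝔧 f t) ∧
    spanNLE K 𝔧 t ⊔ GleSub K 𝔧 f t = degLE K N t

section Aux

variable {N : ℕ}

lemma mdeg_add (a b : Mon N) : mdeg (a + b) = mdeg a + mdeg b := by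
  unfold mdeg
  exact Finsupp.sum_add_index' (fun _ => rfl) (fun _ _ _ => rfl)

lemma mdeg_single (i : Fin N) : mdeg (Finsupp.single i 1) = 1 := by
  unfold mdeg
  rw [Finsupp.sum_single_index rfl]

lemma mdeg_zero : mdeg (0 : Mon N) = 0 := by
  unfold mdeg; simp

variable (K : Type) [Field K]

lemma support_mono (u : Mon N) : (mono K u).support = {u} := by
  classical
  unfold mono
  rw [MvPolynomial.support_monomial]
  simp

/-- Polynomials with support in `S` form a submodule. -/
def suppIn (S : Set (Mon N)) : Submodule K (MvPolynomial (Fin N) K) where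
  carrier := {g | ∀ u ∈ g.support, u ∈ S}
  zero_mem' := by simp
  add_mem' := by
    intro a b ha hb u hu
    rcases Finset.mem_union.mp (MvPolynomial.support_add hu) with h | h
    · exact ha u h
    · exact hb u h
  smul_mem' := by
    intro c a ha u hu
    exact ha u (MvPolynomial.support_smul hu)

lemma mem_span_mono {S : Set (Mon N)} {p : MvPolynomial (Fin N) K}
    (h : ∀ u ∈ p.support, u ∈ S) : p ∈ Submodule.span K (mono K '' S) := by
  rw [MvPolynomial.as_sum p]
  refine Submodule.sum_mem _ fun v hv => ?_
  have hmv : (MvPolynomial.monomial v) (MvPolynomial.coeff v p)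
      = (MvPolynomial.coeff v p) • mono K v := by
    unfold mono
    rw [MvPolynomial.smul_monomial, smul_eq_mul, mul_one]
  rw [hmv]
  exact Submodule.smul_mem _ _ (Submodule.subset_span ⟨v, h v hv, rfl⟩)

lemma supp_of_mem_span {S : Set (Mon N)} {p : MvPolynomial (Fin N) K}
    (hp : p ∈ Submodule.span K (mono K '' S)) : ∀ u ∈ p.support, u ∈ S := by
  have hle : Submodule.span K (mono K '' S) ≤ suppIn K S := by
    rw [Submodule.span_le]
    rintro _ ⟨u, hu, rfl⟩ w hw
    rw [support_mono] at hw
    rw [Finset.mem_singleton] at hw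
    subst hw; exact hu
  exact hle hp

lemma spanNLE_supp {𝔧 : Set (Mon N)} {t : ℕ} {p : MvPolynomial (Fin N) K}
    (hp : p ∈ spanNLE K 𝔧 t) : ∀ u ∈ p.support, u ∉ 𝔧 ∧ mdeg u ≤ t :=
  supp_of_mem_span K hp

lemma spanNLE_mono (𝔧 : Set (Mon N)) {t t' : ℕ} (h : t ≤ t') :
    spanNLE K 𝔧 t ≤ spanNLE K 𝔧 t' :=
  Submodule.span_mono (Set.image_mono fun u hu => ⟨hu.1, hu.2.trans h⟩)

lemma degLE_mono {t t' : ℕ} (h : t ≤ t') : degLE K N t ≤ degLE K N t' :=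
  fun p hp u hu => le_trans (hp u hu) h

lemma GleSub_mono (𝔧 : Set (Mon N)) (f : Mon N → MvPolynomial (Fin N) K)
    {t t' : ℕ} (h : t ≤ t') : GleSub K 𝔧 f t ≤ GleSub K 𝔧 f t' :=
  inf_le_inf_left _ (degLE_mono K h)

lemma V_mono (𝔧 : Set (Mon N)) (f : Mon N → MvPolynomial (Fin N) K)
    {t t' : ℕ} (h : t ≤ t') :
    spanNLE K 𝔧 t ⊔ GleSub K 𝔧 f t ≤ spanNLE K 𝔧 t' ⊔ GleSub K 𝔧 f t' :=
  sup_le_sup (spanNLE_mono K 𝔧 h) (GleSub_mono K 𝔧 f h)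

lemma mem_GleSub {𝔧 : Set (Mon N)} {f : Mon N → MvPolynomial (Fin N) K} {t : ℕ}
    {p : MvPolynomial (Fin N) K} (h1 : p ∈ idealG K 𝔧 f)
    (h2 : ∀ u ∈ p.support, mdeg u ≤ t) : p ∈ GleSub K 𝔧 f t :=
  ⟨h1, h2⟩

/-- A marked polynomial with head `u` and reduced tail of degree `≤ t` puts `mono u`
into the sum. -/
lemma head_tail {𝔧 : Set (Mon N)} {f : Mon N → MvPolynomial (Fin N) K} {t : ℕ}
    {u : Mon N} {p : MvPolynomial (Fin N) K} (hp : p ∈ idealG K 𝔧 f)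
    (h1 : MvPolynomial.coeff u p = 1)
    (ht : ∀ w ∈ p.support, w ≠ u → w ∉ 𝔧 ∧ mdeg w ≤ t) (hu : mdeg u ≤ t) :
    mono K u ∈ spanNLE K 𝔧 t ⊔ GleSub K 𝔧 f t := by
  rw [Submodule.mem_sup]
  refine ⟨mono K u - p, ?_, p, ?_, by ring⟩
  · apply mem_span_mono
    intro w hw
    have hwu : w ≠ u := by
      intro h; subst h
      apply MvPolynomial.mem_support_iff.mp hw
      unfold mono
      rw [MvPolynomial.coeff_sub, MvPolynomial.coeff_monomial, if_pos rfl, h1, sub_self]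
    have hwp : w ∈ p.support := by
      rcases Finset.mem_union.mp (MvPolynomial.support_sub _ _ _ hw) with h | h
      · rw [support_mono, Finset.mem_singleton] at h
        exact absurd h hwu
      · exact h
    exact ht w hwp hwu
  · refine mem_GleSub K hp fun w hw => ?_
    by_cases hwu : w = u
    · subst hwu; exact hu
    · exact (ht w hw hwu).2

end Aux

section Aux2

variable {N : ℕ}

lemma borel_move {𝔧 : Set (Mon N)} (hss : StronglyStable 𝔧) {b : Mon N} (hb : b ∈ 𝔧)
    {i j : Fin N} (hij : i < j) (hbi : b i ≠ 0) :
    b - Finsupp.single i 1 + Finsupp.single j 1 ∈ 𝔧 := by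
  apply hss.2 b hb
  apply Relation.TransGen.single
  refine ⟨i, j, hij, ?_⟩
  ext k
  simp only [Finsupp.add_apply, Finsupp.tsub_apply, Finsupp.single_apply]
  rcases eq_or_ne i k with h1 | h1 <;> rcases eq_or_ne j k with h2 | h2
  · exact absurd (h1.trans h2.symm) hij.ne
  · subst h1
    rw [if_pos rfl, if_neg h2]
    have : b i ≠ 0 := hbi
    omega
  · subst h2
    rw [if_neg h1, if_pos rfl]
    omega
  · rw [if_neg h1, if_neg h2]
    omega

lemma exists_sub_mem {𝔧 : Set (Mon N)} (hss : StronglyStable 𝔧) {u : Mon N}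
    (hu : u ∈ 𝔧) (hnB : u ∉ MinBasis 𝔧) :
    ∃ i : Fin N, u i ≠ 0 ∧ u - Finsupp.single i 1 ∈ 𝔧 := by
  have : ∃ v ∈ 𝔧, v ≤ u ∧ v ≠ u := by
    by_contra hc
    push_neg at hc
    exact hnB ⟨hu, fun v hv hvle => hc v hv hvle⟩
  obtain ⟨v, hv, hvle, hvne⟩ := this
  have hle : ∀ k, v k ≤ u k := fun k => Finsupp.le_def.mp hvle k
  have : ∃ i, v i ≠ u i := by
    by_contra hc
    push_neg at hc
    exact hvne (Finsupp.ext hc)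
  obtain ⟨i, hi⟩ := this
  have hlt : v i < u i := lt_of_le_of_ne (hle i) hi
  refine ⟨i, by omega, ?_⟩
  have heq : u - Finsupp.single i 1 = v + (u - Finsupp.single i 1 - v) := by
    ext k
    simp only [Finsupp.add_apply, Finsupp.tsub_apply, Finsupp.single_apply]
    have := hle k
    rcases eq_or_ne i k with h | h
    · subst h; rw [if_pos rfl]; omega
    · rw [if_neg h]; omega
  rw [heq]
  exact hss.1 v hv _

/-- The minimal index of the support of a monomial (as a natural number; `0` if none). -/
noncomputable def minIdx (u : Mon N) : ℕ := sInf {i : ℕ | ∃ hi : i < N, u ⟨i, hi⟩ ≠ 0}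

lemma minIdx_le {u : Mon N} {j : Fin N} (h : u j ≠ 0) : minIdx u ≤ j :=
  Nat.sInf_le ⟨j.isLt, by rwa [Fin.eta]⟩

lemma minIdx_spec {u : Mon N} (h : u ≠ 0) :
    ∃ hlt : minIdx u < N, u ⟨minIdx u, hlt⟩ ≠ 0 := by
  apply Nat.sInf_mem (s := {i : ℕ | ∃ hi : i < N, u ⟨i, hi⟩ ≠ 0})
  have : ∃ a, u a ≠ 0 := by
    by_contra hc
    push_neg at hc
    exact h (Finsupp.ext hc)
  obtain ⟨a, ha⟩ := this
  exact ⟨a, a.isLt, by rwa [Fin.eta]⟩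

lemma minIdx_le_N (u : Mon N) : minIdx u ≤ N := by
  by_cases h : {i : ℕ | ∃ hi : i < N, u ⟨i, hi⟩ ≠ 0}.Nonempty
  · obtain ⟨hlt, _⟩ := Nat.sInf_mem h
    exact le_of_lt hlt
  · rw [Set.not_nonempty_iff_eq_empty] at h
    unfold minIdx
    rw [h, Nat.sInf_empty]
    exact Nat.zero_le N

lemma mdeg_pos_ne_zero {u : Mon N} (h : 0 < mdeg u) : u ≠ 0 := by
  intro hc; subst hc
  rw [mdeg_zero] at h
  exact Nat.lt_irrefl 0 h

/-- Key combinatorial step: if `u ∈ 𝔧` is not a minimal generator, then dividing by the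
smallest variable of `u` stays in `𝔧`. -/
lemma sub_min_mem {𝔧 : Set (Mon N)} (hss : StronglyStable 𝔧) {u : Mon N} (hu : u ∈ 𝔧)
    (hnB : u ∉ MinBasis 𝔧) (hu0 : u ≠ 0) :
    ∃ hlt : minIdx u < N, u - Finsupp.single ⟨minIdx u, hlt⟩ 1 ∈ 𝔧 := by
  obtain ⟨hlt, hne⟩ := minIdx_spec hu0
  refine ⟨hlt, ?_⟩
  set i₀ : Fin N := ⟨minIdx u, hlt⟩ with hi₀
  obtain ⟨i, hui, hmem⟩ := exists_sub_mem hss hu hnB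
  have hle : (i₀ : ℕ) ≤ (i : ℕ) := minIdx_le hui
  rcases eq_or_ne i₀ i with h | h
  · rwa [h]
  have hlt' : i₀ < i := Fin.lt_def.mpr (lt_of_le_of_ne hle fun hc => h (Fin.ext hc))
  have hb : (u - Finsupp.single i 1 : Mon N) i₀ ≠ 0 := by
    rw [Finsupp.tsub_apply, Finsupp.single_apply, if_neg (Ne.symm h), Nat.sub_zero]
    exact hne
  have := borel_move hss hmem hlt' hb
  have heq : u - Finsupp.single i 1 - Finsupp.single i₀ 1 + Finsupp.single i 1
      = u - Finsupp.single i₀ 1 := by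
    ext k
    simp only [Finsupp.add_apply, Finsupp.tsub_apply, Finsupp.single_apply]
    rcases eq_or_ne i k with h1 | h1 <;> rcases eq_or_ne i₀ k with h2 | h2
    · exact absurd (h2.trans h1.symm) h
    · subst h1
      rw [if_pos rfl, if_neg h2]
      have : u i ≠ 0 := hui
      omega
    · subst h2
      rw [if_neg h1, if_pos rfl]
      omega
    · rw [if_neg h1, if_neg h2]
      omega
  rwa [heq] at this

end Aux2

section Aux3

variable {N : ℕ} (K : Type) [Field K]

lemma key_mem {𝔧 : Set (Mon N)} {m : ℕ} {f h : Mon N → MvPolynomial (Fin N) K}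
    (hss : StronglyStable 𝔧) (hms : JmMarkedSet K 𝔧 m f)
    (hcomp : IsCompletion K 𝔧 m f h) :
    ∀ (M : ℕ) (u : Mon N), (N + 1) * mdeg u + minIdx u ≤ M → u ∈ 𝔧 →
      mono K u ∈ spanNLE K 𝔧 (max m (mdeg u)) ⊔ GleSub K 𝔧 f (max m (mdeg u)) := by
  intro M
  induction M using Nat.strong_induction_on with
  | _ M ih =>
  intro u hM hu
  by_cases hB : u ∈ MinBasis 𝔧
  · obtain ⟨h1, h2⟩ := hms u hB
    exact head_tail K (Ideal.subset_span ⟨u, hB, rfl⟩) h1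
      (fun w hw hwu => h2 w hw hwu) (le_max_right _ _)
  rcases le_or_gt (mdeg u) m with hdeg | hdeg
  · obtain ⟨hp, h1, h2⟩ := hcomp u hu hdeg hB
    exact head_tail K hp h1
      (fun w hw hwu => ⟨(h2 w hw hwu).1, (h2 w hw hwu).2.trans (le_max_left _ _)⟩)
      (hdeg.trans (le_max_left _ _))
  · -- recursive case: mdeg u > m, u not a minimal generator
    have hu0 : u ≠ 0 := mdeg_pos_ne_zero (lt_of_le_of_lt (Nat.zero_le m) hdeg)
    obtain ⟨hlt, hmem⟩ := sub_min_mem hss hu hB hu0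
    set i₀ : Fin N := ⟨minIdx u, hlt⟩ with hi₀
    set u' : Mon N := u - Finsupp.single i₀ 1 with hu'
    obtain ⟨_, hui₀'⟩ := minIdx_spec hu0
    have hui₀ : u i₀ ≠ 0 := hui₀'
    have hsum : Finsupp.single i₀ 1 + u' = u := by
      ext k
      rw [hu']
      simp only [Finsupp.add_apply, Finsupp.tsub_apply, Finsupp.single_apply]
      rcases eq_or_ne i₀ k with hk | hk
      · subst hk
        rw [if_pos rfl]
        omega
      · rw [if_neg hk]
        omega
    have hdeg' : mdeg u = mdeg u' + 1 := by
      conv_lhs => rw [← hsum]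
      rw [mdeg_add, mdeg_single]
      omega
    have hμ' : (N + 1) * mdeg u' + minIdx u' < M := by
      have h1 := minIdx_le_N u'
      have h2 : (N + 1) * mdeg u = (N + 1) * mdeg u' + (N + 1) := by rw [hdeg']; ring
      linarith
    have hIH := ih _ hμ' u' le_rfl hmem
    have hm' : m ≤ mdeg u' := by omega
    rw [max_eq_right hm'] at hIH
    rw [max_eq_right hdeg.le]
    obtain ⟨p, hpN, q, hqG, hpq⟩ := Submodule.mem_sup.mp hIH
    have hX : mono K u = mono K (Finsupp.single i₀ 1) * p + mono K (Finsupp.single i₀ 1) * q := by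
      rw [← mul_add, hpq]
      unfold mono
      rw [MvPolynomial.monomial_mul, one_mul, hsum]
    rw [hX]
    apply Submodule.add_mem
    · -- the span part, by span induction
      refine Submodule.span_induction ?_ ?_ ?_ ?_ hpN
      · rintro x ⟨w, hw, rfl⟩
        have hxv : mono K (Finsupp.single i₀ 1) * mono K w
            = mono K (Finsupp.single i₀ 1 + w) := by
          unfold mono
          rw [MvPolynomial.monomial_mul, one_mul]
        rw [hxv]
        set v : Mon N := Finsupp.single i₀ 1 + w with hv
        have hdv : mdeg v = mdeg w + 1 := by rw [hv, mdeg_add, mdeg_single]; omega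
        have hdvs : mdeg v ≤ mdeg u := by
          have := hw.2
          omega
        by_cases hv𝔧 : v ∈ 𝔧
        · by_cases hvB : v ∈ MinBasis 𝔧
          · obtain ⟨h1, h2⟩ := hms v hvB
            exact head_tail K (Ideal.subset_span ⟨v, hvB, rfl⟩) h1
              (fun w' hw' hwv => ⟨(h2 w' hw' hwv).1,
                le_trans (h2 w' hw' hwv).2 (max_le hdeg.le hdvs)⟩) hdvs
          · have hvi₀ : v i₀ ≠ 0 := by
              rw [hv, Finsupp.add_apply, Finsupp.single_eq_same]
              omega
            have hμv : (N + 1) * mdeg v + minIdx v < M := by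
              rcases lt_or_eq_of_le hdvs with hlt2 | heq2
              · have hN := minIdx_le_N v
                have hstep : (N + 1) * (mdeg v + 1) ≤ (N + 1) * mdeg u :=
                  Nat.mul_le_mul_left _ (by omega)
                have hexp : (N + 1) * (mdeg v + 1) = (N + 1) * mdeg v + (N + 1) :=
                  Nat.mul_succ _ _
                linarith
              · have hv0 : v ≠ 0 := by
                  intro hc
                  rw [hc] at hvi₀
                  exact hvi₀ rfl
                obtain ⟨hlt2, hmem2⟩ := sub_min_mem hss hv𝔧 hvB hv0
                have hle2 : minIdx v ≤ minIdx u := minIdx_le hvi₀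
                have hne2 : minIdx v ≠ minIdx u := by
                  intro hc
                  apply hw.1
                  have hfin : (⟨minIdx v, hlt2⟩ : Fin N) = i₀ := Fin.ext hc
                  rw [hfin, hv, add_tsub_cancel_left] at hmem2
                  exact hmem2
                rw [heq2]
                have : minIdx v < minIdx u := lt_of_le_of_ne hle2 hne2
                linarith
            have hIHv := ih _ hμv v le_rfl hv𝔧
            exact V_mono K 𝔧 f (max_le hdeg.le hdvs) hIHv
        · exact Submodule.mem_sup_left (Submodule.subset_span ⟨v, ⟨hv𝔧, hdvs⟩, rfl⟩)
      · rw [mul_zero]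
        exact Submodule.zero_mem _
      · intro x y _ _ hx' hy'
        rw [mul_add]
        exact Submodule.add_mem _ hx' hy'
      · intro c x _ hx'
        rw [mul_smul_comm]
        exact Submodule.smul_mem _ _ hx'
    · -- the ideal part
      apply Submodule.mem_sup_right
      refine mem_GleSub K (Ideal.mul_mem_left _ _ hqG.1) ?_
      intro w hw
      have hw' := MvPolynomial.support_mul _ _ hw
      rw [Finset.mem_add] at hw'
      obtain ⟨a, ha, b, hb, rfl⟩ := hw'
      rw [support_mono, Finset.mem_singleton] at ha
      subst ha
      have hbq : mdeg b ≤ mdeg u' := hqG.2 b hb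
      rw [mdeg_add, mdeg_single]
      omega

end Aux3

section Aux4

variable {N : ℕ} (K : Type) [Field K]

lemma sup_eq_degLE {𝔧 : Set (Mon N)} {m : ℕ} {f h : Mon N → MvPolynomial (Fin N) K}
    (hss : StronglyStable 𝔧) (hms : JmMarkedSet K 𝔧 m f) (hcomp : IsCompletion K 𝔧 m f h)
    {t : ℕ} (ht : m ≤ t) :
    spanNLE K 𝔧 t ⊔ GleSub K 𝔧 f t = degLE K N t := by
  apply le_antisymm
  · apply sup_le
    · rw [spanNLE, Submodule.span_le]
      rintro _ ⟨u, hu, rfl⟩ w hw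
      rw [support_mono, Finset.mem_singleton] at hw
      subst hw
      exact hu.2
    · exact inf_le_right
  · intro g hg
    rw [MvPolynomial.as_sum g]
    apply Submodule.sum_mem
    intro v hv
    have hmv : (MvPolynomial.monomial v) (MvPolynomial.coeff v g)
        = (MvPolynomial.coeff v g) • mono K v := by
      unfold mono
      rw [MvPolynomial.smul_monomial, smul_eq_mul, mul_one]
    rw [hmv]
    apply Submodule.smul_mem
    have hvt : mdeg v ≤ t := hg v hv
    by_cases hv𝔧 : v ∈ 𝔧
    · exact V_mono K 𝔧 f (max_le ht hvt)
        (key_mem K hss hms hcomp _ v le_rfl hv𝔧)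
    · exact Submodule.mem_sup_left (Submodule.subset_span ⟨v, ⟨hv𝔧, hvt⟩, rfl⟩)

end Aux4

/-- a `[𝔧,m]`-marked set `𝔊` is a `[𝔧,m]`-marked basis iff it
admits a `[𝔧,m]`-completion and `[𝔧,m]`-reduced forms modulo `(𝔊)` are unique. -/
theorem markedBasis_iff_completion_and_unique {n : ℕ} (K : Type) [Field K]
    (𝔧 : Set (Mon n)) (m : ℕ) (f : Mon n → MvPolynomial (Fin n) K)
    (hss : StronglyStable 𝔧) (hm : 0 < m) (hms : JmMarkedSet K 𝔧 m f) :
    JmMarkedBasis K 𝔧 m f ↔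
    ((∃ h : Mon n → MvPolynomial (Fin n) K, IsCompletion K 𝔧 m f h) ∧
      ∀ g g₁ g₂ : MvPolynomial (Fin n) K,
        IsReducedForm K 𝔧 m f g g₁ → IsReducedForm K 𝔧 m f g g₂ → g₁ = g₂) := by
  classical
  constructor
  · intro hbasis
    constructor
    · -- a completion exists
      have hdec := hbasis.2 m le_rfl
      have hex : ∀ β : Mon n, β ∈ 𝔧 → mdeg β ≤ m →
          ∃ p : MvPolynomial (Fin n) K, p ∈ idealG K 𝔧 f ∧ MvPolynomial.coeff β p = 1 ∧
            ∀ u ∈ p.support, u ≠ β → u ∉ 𝔧 ∧ mdeg u ≤ m := by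
        intro β hβ hβm
        have hmem : mono K β ∈ degLE K n m := by
          intro w hw
          rw [support_mono, Finset.mem_singleton] at hw
          subst hw
          exact hβm
        rw [← hdec.2] at hmem
        obtain ⟨x, hx, y, hy, hxy⟩ := Submodule.mem_sup.mp hmem
        refine ⟨y, hy.1, ?_, ?_⟩
        · have hcx : MvPolynomial.coeff β x = 0 := by
            by_contra hc
            exact (spanNLE_supp K hx β (MvPolynomial.mem_support_iff.mpr hc)).1 hβ
          have hco := congrArg (MvPolynomial.coeff β) hxy
          unfold mono at hco
          rw [MvPolynomial.coeff_add, MvPolynomial.coeff_monomial, if_pos rfl, hcx,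
            zero_add] at hco
          exact hco
        · intro u hu hub
          have hux : u ∈ x.support := by
            have hy' : y = mono K β - x := by rw [← hxy]; ring
            rw [hy'] at hu
            rcases Finset.mem_union.mp (MvPolynomial.support_sub _ _ _ hu) with h1 | h1
            · rw [support_mono, Finset.mem_singleton] at h1
              exact absurd h1 hub
            · exact h1
          exact spanNLE_supp K hx u hux
      refine ⟨fun β => if c : β ∈ 𝔧 ∧ mdeg β ≤ m then (hex β c.1 c.2).choose else 0, ?_⟩
      intro β hβ hβm _
      beta_reduce
      rw [dif_pos ⟨hβ, hβm⟩]
      exact (hex β hβ hβm).choose_spec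
    · -- reduced forms are unique
      intro g g₁ g₂ h1 h2
      set t := max m g.totalDegree with hts
      have hdisj := (hbasis.2 t (le_max_left _ _)).1
      have hsupp : ∀ u ∈ (g₁ - g₂).support, u ∉ 𝔧 ∧ mdeg u ≤ t := by
        intro u hu
        rcases Finset.mem_union.mp (MvPolynomial.support_sub _ _ _ hu) with hx | hx
        · exact h1.1 u hx
        · exact h2.1 u hx
      have hm1 : g₁ - g₂ ∈ spanNLE K 𝔧 t := mem_span_mono K hsupp
      have hm2 : g₁ - g₂ ∈ GleSub K 𝔧 f t := by
        refine mem_GleSub K ?_ (fun u hu => (hsupp u hu).2)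
        have hsub := Ideal.sub_mem _ h2.2 h1.2
        have heq : (g - g₂) - (g - g₁) = g₁ - g₂ := by ring
        rwa [heq] at hsub
      exact sub_eq_zero.mp (Submodule.disjoint_def.mp hdisj _ hm1 hm2)
  · rintro ⟨⟨h, hcomp⟩, huniq⟩
    refine ⟨hms, fun t ht => ⟨?_, sup_eq_degLE K hss hms hcomp ht⟩⟩
    rw [Submodule.disjoint_def]
    intro x hx1 hx2
    have r1 : IsReducedForm K 𝔧 m f x x := by
      refine ⟨fun u hu => ⟨(spanNLE_supp K hx1 u hu).1,
        le_trans (MvPolynomial.le_totalDegree hu) (le_max_right _ _)⟩, ?_⟩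
      rw [sub_self]
      exact Submodule.zero_mem _
    have r2 : IsReducedForm K 𝔧 m f x 0 := by
      refine ⟨by simp, ?_⟩
      rw [sub_zero]
      exact hx2.1
    exact huniq x x 0 r1 r2

end Paper
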